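/- Let p be an odd prime and k = 𝔽_p = ZMod p. Let 𝔰𝔩₂(k) be the Lie algebra of trace-zero 2×2 matrices over k, with standard basis e = E₁₂, f = E₂₁, h = E₁₁ − E₂₂, and let U = U(𝔰𝔩₂(k)) with canonical embedding ι. Set E = ι(e), F = ι(f), H = ι(h), x = Eᵖ, y = Fᵖ, z = Hᵖ − H, and Δ = 4·F·E + H² + 2·H. Then in U the identity (Δ+1)ᵖ − 2·(Δ+1)^{(p+1)/2} + (Δ+1) = 4·x·y + z² holds. -/

import Mathlib

open LieAlgebra.SpecialLinear

/-- `e = E₁₂` in `𝔰𝔩₂(ZMod p)`. -/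
noncomputable def sl2e (p : ℕ) : sl (Fin 2) (ZMod p) := LieAlgebra.SpecialLinear.single 0 1 (by decide) (1 : ZMod p)

/-- `f = E₂₁` in `𝔰𝔩₂(ZMod p)`. -/
noncomputable def sl2f (p : ℕ) : sl (Fin 2) (ZMod p) := LieAlgebra.SpecialLinear.single 1 0 (by decide) (1 : ZMod p)

/-- `h = E₁₁ − E₂₂` in `𝔰𝔩₂(ZMod p)`. -/
noncomputable def sl2h (p : ℕ) : sl (Fin 2) (ZMod p) :=
  ⟨Matrix.single 0 0 (1 : ZMod p) - Matrix.single 1 1 (1 : ZMod p),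
    show _ ∈ LinearMap.ker (Matrix.traceLinearMap (Fin 2) (ZMod p) (ZMod p)) by
      rw [LinearMap.mem_ker]
      simp [Matrix.trace_sub, Matrix.trace_single_eq_same]⟩

attribute [local instance 100] LieRing.ofAssociativeRing

open Polynomial
open scoped Polynomial.Bivariate

theorem PI (p : ℕ) [Fact p.Prime] :
    ∏ a : ZMod p, (X - C a) = X ^ p - X := by
  have hp : p.Prime := Fact.out
  have hq : Fintype.card (ZMod p) = p := ZMod.card p
  have hmon : (X ^ p - X : (ZMod p)[X]).Monic := by
    obtain ⟨m, hm⟩ : ∃ m, p = m + 1 := ⟨p - 1, (Nat.succ_pred_eq_of_pos hp.pos).symm⟩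
    suffices h : (X ^ (m+1) - X : (ZMod p)[X]).Monic by rwa [← hm] at h
    apply Polynomial.monic_X_pow_sub
    rw [degree_X]
    have h2 := hp.two_le
    exact_mod_cast (by omega : 1 < m + 1)
  have hroots := FiniteField.roots_X_pow_card_sub_X (ZMod p)
  rw [hq] at hroots
  have hdeg := FiniteField.X_pow_card_sub_X_natDegree_eq (ZMod p) hp.one_lt
  have := Polynomial.prod_multiset_X_sub_C_of_monic_of_roots_card_eq hmon
    (by rw [hroots, hdeg]; simpa using hq)
  rw [hroots] at this
  rw [← this, Finset.prod_eq_multiset_prod]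

lemma L1 (p : ℕ) [Fact p.Prime] {A : Type*} [CommRing A] [Algebra (ZMod p) A] (t : A) :
    ∏ a : ZMod p, (t - algebraMap (ZMod p) A a) = t ^ p - t := by
  have := congrArg (aeval t : (ZMod p)[X] →ₐ[ZMod p] A) (PI p)
  simpa [map_prod] using this

lemma CC_eq_algebraMap (p : ℕ) (a : ZMod p) :
    (Polynomial.CC a : (ZMod p)[X][Y]) = algebraMap (ZMod p) ((ZMod p)[X][Y]) a := by
  rw [IsScalarTower.algebraMap_apply (ZMod p) ((ZMod p)[X]) (((ZMod p)[X][Y]))]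
  simp [Polynomial.algebraMap_eq]

lemma Sident (p : ℕ) [Fact p.Prime] (hodd : Odd p) :
    ∏ a : ZMod p, (((C X : (ZMod p)[X][Y]))^2 - (Y - Polynomial.CC a)^2)
      = ((C X : (ZMod p)[X][Y])^2)^p - 2*((C X : (ZMod p)[X][Y])^2)^((p+1)/2)
        + (C X : (ZMod p)[X][Y])^2 - (Y^p - Y)^2 := by
  have hp : p.Prime := Fact.out
  set s : (ZMod p)[X][Y] := C X with hs
  have key : ∀ a : ZMod p, s^2 - (Y - Polynomial.CC a)^2
      = ((s - Y) - Polynomial.CC (-a)) * ((s + Y) - Polynomial.CC a) := by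
    intro a
    simp only [Polynomial.CC, map_neg]
    ring
  rw [Finset.prod_congr rfl (fun a _ => key a), Finset.prod_mul_distrib]
  have e1 : ∏ a : ZMod p, ((s - Y) - Polynomial.CC (-a)) = (s - Y)^p - (s - Y) := by
    rw [← L1 p (s - Y)]
    exact Fintype.prod_equiv (Equiv.neg (ZMod p)) _ _
      (fun a => by simp only [CC_eq_algebraMap, Equiv.neg_apply])
  have e2 : ∏ a : ZMod p, ((s + Y) - Polynomial.CC a) = (s + Y)^p - (s + Y) := by
    rw [← L1 p (s + Y)]
    exact Finset.prod_congr rfl (fun a _ => by rw [CC_eq_algebraMap])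
  rw [e1, e2]
  haveI : CharP ((ZMod p)[X][Y]) p := by
    haveI : CharP ((ZMod p)[X]) p := Polynomial.instCharP p
    exact Polynomial.instCharP p
  rw [sub_pow_char, add_pow_char]
  have hpow : 2 * ((p+1)/2) = p + 1 := Nat.mul_div_cancel' (even_iff_two_dvd.mp (Odd.add_one hodd))
  have h1 : ((s^2)^p : (ZMod p)[X][Y]) = (s^p)^2 := by rw [← pow_mul, ← pow_mul, Nat.mul_comm]
  have h2 : ((s^2)^((p+1)/2) : (ZMod p)[X][Y]) = s^p * s := by
    rw [← pow_mul, hpow, pow_succ]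
  rw [h1, h2]
  ring

lemma ginj (p : ℕ) [Fact p.Prime] :
    Function.Injective (aeval (X^2 : (ZMod p)[X]) : (ZMod p)[X] →ₐ[ZMod p] (ZMod p)[X]) := by
  intro f₁ f₂ h
  have hsub : (f₁ - f₂).comp (X^2) = 0 := by
    rw [comp_eq_aeval, map_sub, h, sub_self]
  rcases (Polynomial.comp_eq_zero_iff).mp hsub with h0 | ⟨_, h2⟩
  · exact sub_eq_zero.mp h0
  · exfalso
    have := congrArg natDegree h2
    simp [natDegree_X_pow] at this

lemma key_poly (p : ℕ) [Fact p.Prime] (hodd : Odd p) :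
    ∏ a : ZMod p, ((C X : (ZMod p)[X][Y]) - (Y - Polynomial.CC a)^2) + (Y^p - Y)^2
      = (C X : (ZMod p)[X][Y])^p - 2*(C X : (ZMod p)[X][Y])^((p+1)/2) + C X := by
  set g : (ZMod p)[X] →+* (ZMod p)[X] :=
    (aeval (X^2 : (ZMod p)[X]) : (ZMod p)[X] →ₐ[ZMod p] (ZMod p)[X]).toRingHom with hg
  have hΨ : Function.Injective (Polynomial.mapRingHom g) :=
    Polynomial.map_injective g (ginj p)
  apply hΨ
  have hgX : g X = X^2 := by rw [hg]; simp
  have hgC : ∀ a : ZMod p, g (C a) = C a := by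
    intro a; rw [hg]; simp
  have hΨCX : Polynomial.map g (C X : (ZMod p)[X][Y]) = (C X)^2 := by
    rw [map_C, hgX, map_pow]
  have hΨCC : ∀ a : ZMod p, Polynomial.map g (Polynomial.CC a) = Polynomial.CC a := by
    intro a
    rw [Polynomial.CC, map_C, hgC]
  simp only [map_add, map_sub, map_pow, map_prod, map_mul, coe_mapRingHom, Polynomial.map_X,
    Polynomial.map_ofNat, hΨCX, hΨCC]
  rw [Sident p hodd]
  ring

lemma zmodTwoNeZero (p : ℕ) [Fact p.Prime] (hodd : Odd p) : (2 : ZMod p) ≠ 0 := by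
  have hp : p.Prime := Fact.out
  have : ((2:ℕ) : ZMod p) ≠ 0 := by
    rw [Ne, ZMod.natCast_eq_zero_iff]
    intro hdvd
    have hp2 : p = 2 := (Nat.prime_dvd_prime_iff_eq hp Nat.prime_two).mp hdvd
    rw [hp2] at hodd
    exact absurd hodd (by norm_num)
  simpa using this

lemma reindex (p : ℕ) [Fact p.Prime] (hodd : Odd p) :
    ∏ i ∈ Finset.range p, ((C X : (ZMod p)[X][Y]) - (Y - Polynomial.CC ((2*i+1 : ℕ) : ZMod p))^2)
      = ∏ a : ZMod p, ((C X : (ZMod p)[X][Y]) - (Y - Polynomial.CC a)^2) := by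
  have hp : p.Prime := Fact.out
  haveI : NeZero p := ⟨hp.pos.ne'⟩
  have h2 : (2 : ZMod p) * 2⁻¹ = 1 := mul_inv_cancel₀ (zmodTwoNeZero p hodd)
  refine Finset.prod_bij' (fun i _ => ((2*i+1 : ℕ) : ZMod p))
    (fun b _ => ((b - 1) * (2 : ZMod p)⁻¹).val)
    (fun a ha => Finset.mem_univ _) (fun b hb => Finset.mem_range.mpr (ZMod.val_lt _))
    ?_ ?_ ?_
  · intro a ha
    have hlt : a < p := Finset.mem_range.mp ha
    have : (((2*a+1 : ℕ) : ZMod p) - 1) * (2 : ZMod p)⁻¹ = (a : ZMod p) := by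
      push_cast
      linear_combination ((a : ZMod p)) * h2
    rw [this, ZMod.val_cast_of_lt hlt]
  · intro b hb
    push_cast
    rw [ZMod.natCast_val, ZMod.cast_id]
    linear_combination (b - 1) * h2
  · intro a ha
    rfl

section RingLemmas
variable {R : Type*} [Ring R] (E F H : R)

lemma casimir_comm_E (hef : E*F = F*E + H) (heh : E*H = H*E - 2*E) :
    E * (4*F*E + H^2 + 2*H + 1) = (4*F*E + H^2 + 2*H + 1) * E := by
  have eH2 : E * (H*H) = H*(H*E) - 4*(H*E) + 4*E := by
    calc E*(H*H) = (E*H)*H := by noncomm_ring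
    _ = (H*E - 2*E)*H := by rw [heh]
    _ = H*(E*H) - 2*(E*H) := by noncomm_ring
    _ = H*(H*E - 2*E) - 2*(H*E - 2*E) := by rw [heh]
    _ = H*(H*E) - 4*(H*E) + 4*E := by noncomm_ring
  calc E * (4*F*E + H^2 + 2*H + 1) = 4*((E*F)*E) + E*(H*H) + 2*(E*H) + E := by noncomm_ring
  _ = 4*((F*E + H)*E) + (H*(H*E) - 4*(H*E) + 4*E) + 2*(H*E - 2*E) + E := by rw [hef, eH2, heh]
  _ = (4*F*E + H^2 + 2*H + 1) * E := by noncomm_ring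

lemma casimir_comm_F (hef : E*F = F*E + H) (hhf : H*F = F*H - 2*F) :
    (4*F*E + H^2 + 2*H + 1) * F = F * (4*F*E + H^2 + 2*H + 1) := by
  have hH2 : (H*H)*F = F*(H*H) - 4*(F*H) + 4*F := by
    calc (H*H)*F = H*(H*F) := by noncomm_ring
    _ = H*(F*H - 2*F) := by rw [hhf]
    _ = (H*F)*H - 2*(H*F) := by noncomm_ring
    _ = (F*H - 2*F)*H - 2*(F*H - 2*F) := by rw [hhf]
    _ = F*(H*H) - 4*(F*H) + 4*F := by noncomm_ring
  calc (4*F*E + H^2 + 2*H + 1) * F = 4*(F*(E*F)) + (H*H)*F + 2*(H*F) + F := by noncomm_ring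
  _ = 4*(F*(F*E + H)) + (F*(H*H) - 4*(F*H) + 4*F) + 2*(F*H - 2*F) + F := by rw [hef, hH2, hhf]
  _ = F * (4*F*E + H^2 + 2*H + 1) := by noncomm_ring

lemma casimir_comm_H (heh : E*H = H*E - 2*E) (hhf : H*F = F*H - 2*F) :
    H * (4*F*E + H^2 + 2*H + 1) = (4*F*E + H^2 + 2*H + 1) * H := by
  have hHE : H*E = E*H + 2*E := by rw [heh]; noncomm_ring
  have key : H*(F*E) = (F*E)*H := by
    calc H*(F*E) = (H*F)*E := by noncomm_ring
    _ = (F*H - 2*F)*E := by rw [hhf]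
    _ = F*(H*E) - 2*(F*E) := by noncomm_ring
    _ = F*(E*H + 2*E) - 2*(F*E) := by rw [hHE]
    _ = (F*E)*H := by noncomm_ring
  calc H * (4*F*E + H^2 + 2*H + 1) = 4*(H*(F*E)) + H*H^2 + 2*H^2 + H := by noncomm_ring
  _ = 4*((F*E)*H) + H*H^2 + 2*H^2 + H := by rw [key]
  _ = (4*F*E + H^2 + 2*H + 1) * H := by noncomm_ring

lemma ef4 (hef : E*F = F*E + H) :
    4*E*F = (4*F*E + H^2 + 2*H + 1) - (H - 1)^2 := by
  calc 4*E*F = 4*(E*F) := by noncomm_ring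
  _ = 4*(F*E + H) := by rw [hef]
  _ = (4*F*E + H^2 + 2*H + 1) - (H - 1)^2 := by noncomm_ring

lemma shuffle (q e f : R) (n : ℕ) (hq : ∀ w : R, Commute q w) :
    q^(n+1) * ((e*e^n) * (f^n*f)) = q * (e * (q^n * (e^n*f^n)) * f) := by
  have h1 : q^n * q = q * q^n := ((Commute.refl q).pow_left n).eq
  have h2 : q^n * e = e * q^n := ((hq e).pow_left n).eq
  calc q^(n+1) * ((e*e^n)*(f^n*f)) = (q^n*q) * ((e*e^n)*(f^n*f)) := by rw [pow_succ]
  _ = (q*q^n)*((e*e^n)*(f^n*f)) := by rw [h1]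
  _ = q * ((q^n*e) * (e^n * (f^n*f))) := by noncomm_ring
  _ = q * ((e*q^n) * (e^n*(f^n*f))) := by rw [h2]
  _ = q * (e*(q^n*(e^n*f^n)) * f) := by noncomm_ring

end RingLemmas

lemma lie_ef (p : ℕ) : ⁅sl2e p, sl2f p⁆ = sl2h p := by
  apply Subtype.ext
  rw [LieSubalgebra.coe_bracket, Ring.lie_def]
  show Matrix.single 0 1 (1 : ZMod p) * Matrix.single 1 0 1
      - Matrix.single 1 0 1 * Matrix.single 0 1 1 = _
  rw [Matrix.single_mul_single_same, Matrix.single_mul_single_same, one_mul]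
  rfl

lemma lie_he (p : ℕ) : ⁅sl2h p, sl2e p⁆ = sl2e p + sl2e p := by
  apply Subtype.ext
  rw [LieSubalgebra.coe_bracket, Ring.lie_def]
  show (Matrix.single 0 0 (1 : ZMod p) - Matrix.single 1 1 1)
        * Matrix.single 0 1 1
      - Matrix.single 0 1 1
        * (Matrix.single 0 0 1 - Matrix.single 1 1 1)
      = Matrix.single 0 1 1 + Matrix.single 0 1 1
  have z1 : Matrix.single (1:Fin 2) (1:Fin 2) (1:ZMod p)
      * Matrix.single 0 1 1 = 0 :=
    Matrix.single_mul_single_of_ne (1:ZMod p) (1:Fin 2) (1:Fin 2) (0:Fin 2) (by decide) 1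
  have z2 : Matrix.single (0:Fin 2) (1:Fin 2) (1:ZMod p)
      * Matrix.single 0 0 1 = 0 :=
    Matrix.single_mul_single_of_ne (1:ZMod p) (0:Fin 2) (1:Fin 2) (0:Fin 2) (by decide) 1
  rw [sub_mul, mul_sub, Matrix.single_mul_single_same, Matrix.single_mul_single_same,
    z1, z2, one_mul]
  abel

lemma lie_hf (p : ℕ) : ⁅sl2h p, sl2f p⁆ = -(sl2f p + sl2f p) := by
  apply Subtype.ext
  rw [LieSubalgebra.coe_bracket, Ring.lie_def]
  show (Matrix.single 0 0 (1 : ZMod p) - Matrix.single 1 1 1)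
        * Matrix.single 1 0 1
      - Matrix.single 1 0 1
        * (Matrix.single 0 0 1 - Matrix.single 1 1 1)
      = -(Matrix.single 1 0 1 + Matrix.single 1 0 1)
  have z1 : Matrix.single (0:Fin 2) (0:Fin 2) (1:ZMod p)
      * Matrix.single 1 0 1 = 0 :=
    Matrix.single_mul_single_of_ne (1:ZMod p) (0:Fin 2) (0:Fin 2) (1:Fin 2) (by decide) 1
  have z2 : Matrix.single (1:Fin 2) (0:Fin 2) (1:ZMod p)
      * Matrix.single 1 1 1 = 0 :=
    Matrix.single_mul_single_of_ne (1:ZMod p) (1:Fin 2) (0:Fin 2) (1:Fin 2) (by decide) 1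
  rw [sub_mul, mul_sub, Matrix.single_mul_single_same, Matrix.single_mul_single_same,
    z1, z2, one_mul]
  abel

noncomputable def Qpoly (p n : ℕ) : (ZMod p)[X][Y] :=
  ∏ i ∈ Finset.range n, (C X - (Y - Polynomial.CC ((2*i+1 : ℕ) : ZMod p))^2)

lemma Qdef (p n : ℕ) : Qpoly p n
    = ∏ i ∈ Finset.range n, (C X - (Y - Polynomial.CC ((2*i+1 : ℕ) : ZMod p))^2) := rfl

lemma Qsucc (p n : ℕ) :
    Qpoly p (n+1) = (C X - (Y-1)^2) * (aeval (Y - 2 : (ZMod p)[X][Y]) (Qpoly p n)) := by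
  have sC : ∀ q : (ZMod p)[X], (aeval (Y - 2 : (ZMod p)[X][Y])) (C q) = C q := fun q => by
    rw [aeval_C, Polynomial.algebraMap_eq]
  rw [Qdef, Qdef, map_prod, Finset.prod_range_succ',
    mul_comm ((C X : (ZMod p)[X][Y]) - (Y-1)^2) _]
  refine congrArg₂ (· * ·) ?_ ?_
  · refine Finset.prod_congr rfl ?_
    intro i _
    rw [map_sub, map_pow, map_sub, aeval_X, sC, sC]
    have harg : (Y : (ZMod p)[X][Y]) - Polynomial.CC ((2*(i+1)+1 : ℕ) : ZMod p)
        = Y - 2 - Polynomial.CC ((2*i+1 : ℕ) : ZMod p) := by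
      rw [show ((2*(i+1)+1 : ℕ) : ZMod p) = ((2*i+1 : ℕ) : ZMod p) + 2 by push_cast; ring]
      simp only [Polynomial.CC, map_add, map_ofNat]
      ring
    rw [harg]
  · norm_num [Polynomial.CC, map_one]

section Main
variable {p : ℕ}

lemma main_generic [Fact p.Prime] (hodd : Odd p) {A : Type*} [Ring A] [Algebra (ZMod p) A]
    (E F H : A)
    (h1 : E*F - F*E = H) (h2 : H*E - E*H = E + E) (h3 : H*F - F*H = -(F + F)) :
    (4*F*E + H^2 + 2*H + 1)^p - 2*(4*F*E + H^2 + 2*H + 1)^((p+1)/2)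
        + (4*F*E + H^2 + 2*H + 1)
      = 4*E^p*F^p + (H^p - H)^2 := by
  have hp : p.Prime := Fact.out
  have hef : E*F = F*E + H := by rw [← h1]; noncomm_ring
  have heh : E*H = H*E - 2*E := by
    have h2' : H*E = E + E + E*H := by rw [← h2]; noncomm_ring
    rw [h2']; noncomm_ring
  have hhf : H*F = F*H - 2*F := by
    have h3' : H*F = -(F+F) + F*H := by rw [← h3]; noncomm_ring
    rw [h3']; noncomm_ring
  set Ca : A := 4*F*E + H^2 + 2*H + 1 with hCa
  have commCE : Commute Ca E := ((casimir_comm_E E F H hef heh).symm : _)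
  have commCF : Commute Ca F := (casimir_comm_F E F H hef hhf : _)
  have commCH : Commute Ca H := ((casimir_comm_H E F H heh hhf).symm : _)
  set φ1 : (ZMod p)[X] →+* A :=
    eval₂RingHom' (algebraMap (ZMod p) A) Ca (fun a => (Algebra.commutes a Ca : _)) with hφ1
  have commφ1 : ∀ (w : A), Commute Ca w → ∀ q : (ZMod p)[X], Commute (φ1 q) w := by
    intro w hw q
    induction q using Polynomial.induction_on with
    | C c =>
      have hc : φ1 (C c) = algebraMap (ZMod p) A c := by rw [hφ1]; exact Polynomial.eval₂_C _ _
      rw [hc]; exact (Algebra.commutes c w : _)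
    | add a b ha hb => rw [map_add]; exact ha.add_left hb
    | monomial n c ih =>
      have hmul : (C c * X^(n+1) : (ZMod p)[X]) = (C c * X^n) * X := by ring
      have hX : φ1 X = Ca := by rw [hφ1]; exact Polynomial.eval₂_X _ _
      rw [hmul, map_mul, hX]
      exact ih.mul_left hw
  set φ2 : (ZMod p)[X][Y] →+* A :=
    eval₂RingHom' φ1 H (fun q => commφ1 H commCH q) with hφ2
  have φ2C : ∀ q : (ZMod p)[X], φ2 (C q) = φ1 q := by intro q; simp [hφ2]
  have φ2X : φ2 Y = H := by simp [hφ2]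
  have φ2CX : φ2 (C X) = Ca := by rw [φ2C, hφ1]; exact Polynomial.eval₂_X _ _
  have sC : ∀ q : (ZMod p)[X], (aeval (Y - 2 : (ZMod p)[X][Y])) (C q) = C q := fun q => by
    rw [aeval_C, Polynomial.algebraMap_eq]
  have Fsemi : ∀ q : (ZMod p)[X][Y],
      φ2 q * F = F * φ2 ((aeval (Y - 2 : (ZMod p)[X][Y])) q) := by
    intro q
    induction q using Polynomial.induction_on with
    | C c => rw [sC, φ2C]; exact ((commφ1 F commCF c).eq : _)
    | add a b ha hb => rw [map_add, map_add, map_add, add_mul, mul_add, ha, hb]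
    | monomial n c ih =>
      have hmul : (C c * X^(n+1) : (ZMod p)[X][Y]) = (C c * X^n) * X := by ring
      have hHF : H * F = F * (H - 2) := by rw [hhf]; noncomm_ring
      have hφY2 : φ2 (Y - 2 : (ZMod p)[X][Y]) = H - 2 := by rw [map_sub, φ2X, map_ofNat]
      rw [hmul, map_mul φ2 (C c * X^n) X, map_mul (aeval (Y - 2 : (ZMod p)[X][Y])) (C c * X^n) X,
        aeval_X, map_mul φ2 ((aeval (Y - 2 : (ZMod p)[X][Y])) (C c * X^n)) (X - 2), φ2X, hφY2]
      calc φ2 (C c * X^n) * H * F = φ2 (C c * X^n) * (H * F) := by rw [mul_assoc]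
      _ = φ2 (C c * X^n) * (F * (H-2)) := by rw [hHF]
      _ = (φ2 (C c * X^n) * F) * (H-2) := by rw [mul_assoc]
      _ = (F * φ2 ((aeval (Y - 2 : (ZMod p)[X][Y])) (C c * X^n))) * (H-2) := by rw [ih]
      _ = F * (φ2 ((aeval (Y - 2 : (ZMod p)[X][Y])) (C c * X^n)) * (H-2)) := by rw [mul_assoc]
  have key : ∀ n : ℕ, (4:A)^n * (E^n * F^n) = φ2 (Qpoly p n) := by
    intro n
    induction n with
    | zero => simp [Qpoly]
    | succ n ih =>
      have c4 : ∀ w : A, Commute (4:A) w := by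
        intro w
        have h4 : ((4:ℕ) : A) = (4:A) := by norm_num
        rw [← h4]; exact Nat.cast_commute 4 w
      have expand : (4:A)^(n+1) * (E^(n+1) * F^(n+1))
          = 4 * (E * ((4:A)^n * (E^n * F^n)) * F) := by
        rw [pow_succ' E, pow_succ F]
        exact shuffle (4:A) E F n c4
      have ef4' : 4*E*F = Ca - (H-1)^2 := ef4 E F H hef
      have hfactor : φ2 (C X - (Y-1)^2) = Ca - (H-1)^2 := by
        rw [map_sub, map_pow, map_sub, φ2CX, φ2X, map_one]
      rw [expand, ih, mul_assoc E (φ2 (Qpoly p n)) F, Fsemi]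
      calc 4 * (E * (F * φ2 ((aeval (Y - 2 : (ZMod p)[X][Y])) (Qpoly p n))))
          = (4*E*F) * φ2 ((aeval (Y - 2 : (ZMod p)[X][Y])) (Qpoly p n)) := by noncomm_ring
      _ = φ2 (C X - (Y-1)^2) * φ2 ((aeval (Y - 2 : (ZMod p)[X][Y])) (Qpoly p n)) := by
          rw [ef4', ← hfactor]
      _ = φ2 ((C X - (Y-1)^2) * (aeval (Y - 2 : (ZMod p)[X][Y])) (Qpoly p n)) :=
          (map_mul φ2 _ _).symm
      _ = φ2 (Qpoly p (n+1)) := by rw [← Qsucc]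
  have h4p : (4:A)^p = 4 := by
    have h4 : (4:A) = algebraMap (ZMod p) A 4 := by rw [map_ofNat]
    rw [h4, ← map_pow, ZMod.pow_card]
  have keyp := key p
  rw [h4p] at keyp
  have lhs_eq : Ca^p - 2*Ca^((p+1)/2) + Ca
      = φ2 ((C X)^p - 2*(C X)^((p+1)/2) + C X) := by
    rw [map_add, map_sub, map_pow, map_mul, map_pow, map_ofNat, φ2CX]
  have rhs_eq : 4*E^p*F^p + (H^p - H)^2 = φ2 (Qpoly p p + (Y^p - Y)^2) := by
    rw [map_add, map_pow, map_sub, map_pow, φ2X, ← keyp]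
    noncomm_ring
  rw [lhs_eq, rhs_eq]
  refine congrArg φ2 ?_
  rw [Qdef, reindex p hodd]
  exact (key_poly p hodd).symm

end Main


/-- In `U(𝔰𝔩₂(𝔽_p))` for an odd prime `p`, with `x = Eᵖ`, `y = Fᵖ`,
`z = Hᵖ − H` and `Δ = 4FE + H² + 2H`, one has
`(Δ+1)ᵖ − 2(Δ+1)^{(p+1)/2} + (Δ+1) = 4xy + z²`. -/
theorem sl2_center_relation (p : ℕ) (hp : p.Prime) (hodd : Odd p) :
    letI U := UniversalEnvelopingAlgebra (ZMod p) (sl (Fin 2) (ZMod p))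
    letI ι := UniversalEnvelopingAlgebra.ι (ZMod p) (L := sl (Fin 2) (ZMod p))
    letI E : U := ι (sl2e p)
    letI F : U := ι (sl2f p)
    letI H : U := ι (sl2h p)
    letI x : U := E ^ p
    letI y : U := F ^ p
    letI z : U := H ^ p - H
    letI Δ : U := 4 * F * E + H ^ 2 + 2 * H
    (Δ + 1) ^ p - 2 * (Δ + 1) ^ ((p + 1) / 2) + (Δ + 1) = 4 * x * y + z ^ 2 := by
  haveI : Fact p.Prime := ⟨hp⟩
  set ι := UniversalEnvelopingAlgebra.ι (ZMod p) (L := sl (Fin 2) (ZMod p)) with hι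
  have h1 : ι (sl2e p) * ι (sl2f p) - ι (sl2f p) * ι (sl2e p) = ι (sl2h p) := by
    rw [← Ring.lie_def, ← LieHom.map_lie, lie_ef]
  have h2 : ι (sl2h p) * ι (sl2e p) - ι (sl2e p) * ι (sl2h p) = ι (sl2e p) + ι (sl2e p) := by
    rw [← Ring.lie_def, ← LieHom.map_lie, lie_he, map_add]
  have h3 : ι (sl2h p) * ι (sl2f p) - ι (sl2f p) * ι (sl2h p) = -(ι (sl2f p) + ι (sl2f p)) := by
    rw [← Ring.lie_def, ← LieHom.map_lie, lie_hf, map_neg, map_add]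
  exact main_generic hodd (ι (sl2e p)) (ι (sl2f p)) (ι (sl2h p)) h1 h2 h3
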